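/- Let f : Ω_δ^⋄ → ℂ be s-holomorphic and H the associated primitive of Im(f²) defined on black and white faces (H(b) - H(w) = δ|P_{ℓ(e)}[f(x)]|² across each medial edge). Then the restriction H^• of H to black faces is discrete subharmonic and the restriction H^∘ to white faces is discrete superharmonic: for every interior black face B, the sum over the four neighboring black faces B' of (H^•(B') - H^•(B)) is ≥ 0, and the analogous sum for white faces is ≤ 0. -/

import Mathlib

/-- Orthogonal projection of `z ∈ ℂ` onto the line `u·ℝ` through the origin
(for `|u| = 1`): `P_{uℝ}(z) = (z + u² z̄)/2`. -/
noncomputable def lineProj (u z : ℂ) : ℂ := (z + u ^ 2 * (starRingEnd ℂ) z) / 2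

/-- Direction spanning the line `ℓ(e)` of the medial edge separating the faces `(m,n)`
and `(m+1,n)` of the medial lattice (faces indexed by `ℤ²`, `(m,n)` black iff `m + n`
even; edges oriented counterclockwise around black faces). -/
noncomputable def uVertEdge (m n : ℤ) : ℂ :=
  if Even (m + n) then Complex.exp (-(Real.pi / 4) * Complex.I)
  else Complex.exp (Real.pi / 4 * Complex.I)

/-- Direction spanning the line `ℓ(e)` of the medial edge separating the faces `(m,n)`
and `(m,n+1)`. -/
noncomputable def uHorEdge (m n : ℤ) : ℂ := if Even (m + n) then Complex.I else 1

/-- `H` is a primitive of `Im(f² dz)`: across each medial edge `e = [xy]` separating a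
black face `b` from a white face `w`, `H(b) - H(w) = δ |P_{ℓ(e)}[f(x)]|²`. -/
noncomputable def IsPrimitiveOfImFSq (δ : ℝ) (f : ℤ × ℤ → ℂ) (H : ℤ × ℤ → ℝ) : Prop :=
  ∀ m n : ℤ,
    ((if Even (m + n) then H (m, n) - H (m + 1, n) else H (m + 1, n) - H (m, n))
      = δ * ‖lineProj (uVertEdge m n) (f (m, n))‖ ^ 2) ∧
    ((if Even (m + n) then H (m, n) - H (m, n + 1) else H (m, n + 1) - H (m, n))
      = δ * ‖lineProj (uHorEdge m n) (f (m, n))‖ ^ 2)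

lemma up_sq : (Complex.exp (Real.pi / 4 * Complex.I)) ^ 2 = Complex.I := by
  rw [sq, ← Complex.exp_add]
  have h : (Real.pi / 4 * Complex.I + Real.pi / 4 * Complex.I : ℂ)
      = (Real.pi / 2 : ℝ) * Complex.I := by push_cast; ring
  rw [h, Complex.exp_mul_I, ← Complex.ofReal_cos, ← Complex.ofReal_sin]
  simp

lemma um_sq : (Complex.exp (-(Real.pi / 4) * Complex.I)) ^ 2 = -Complex.I := by
  rw [sq, ← Complex.exp_add]
  have h : (-(Real.pi / 4) * Complex.I + -(Real.pi / 4) * Complex.I : ℂ)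
      = ((-(Real.pi / 2) : ℝ)) * Complex.I := by push_cast; ring
  rw [h, Complex.exp_mul_I, ← Complex.ofReal_cos, ← Complex.ofReal_sin]
  simp

lemma sq_abs_div_two (w : ℂ) : ‖w / 2‖ ^ 2 = Complex.normSq w / 4 := by
  rw [norm_div, div_pow, Complex.sq_norm]; norm_num

lemma lineProj_one (z : ℂ) : lineProj 1 z = ((z.re : ℝ) : ℂ) := by
  rw [lineProj, one_pow, one_mul, Complex.add_conj]; push_cast; ring

lemma lineProj_I (z : ℂ) : lineProj Complex.I z = (z.im : ℂ) * Complex.I := by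
  rw [lineProj, Complex.I_sq, neg_one_mul, ← sub_eq_add_neg, Complex.sub_conj]
  push_cast; ring

lemma sq_abs_lineProj_one (z : ℂ) : ‖lineProj 1 z‖ ^ 2 = z.re ^ 2 := by
  rw [lineProj_one, Complex.sq_norm, Complex.normSq_ofReal]; ring

lemma sq_abs_lineProj_I (z : ℂ) : ‖lineProj Complex.I z‖ ^ 2 = z.im ^ 2 := by
  rw [lineProj_I, Complex.sq_norm]
  simp [Complex.normSq_apply]
  ring

lemma sq_abs_lineProj_up (z : ℂ) :
    ‖lineProj (Complex.exp (Real.pi / 4 * Complex.I)) z‖ ^ 2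
      = (z.re + z.im) ^ 2 / 2 := by
  rw [lineProj, up_sq, sq_abs_div_two]
  simp [Complex.normSq_apply, Complex.add_re, Complex.add_im, Complex.mul_re, Complex.mul_im]
  ring

lemma sq_abs_lineProj_um (z : ℂ) :
    ‖lineProj (Complex.exp (-(Real.pi / 4) * Complex.I)) z‖ ^ 2
      = (z.re - z.im) ^ 2 / 2 := by
  rw [lineProj, um_sq, sq_abs_div_two]
  simp [Complex.normSq_apply, Complex.add_re, Complex.add_im, Complex.mul_re, Complex.mul_im]
  ring

lemma lineProj_up_re (z : ℂ) :
    (lineProj (Complex.exp (Real.pi / 4 * Complex.I)) z).re = (z.re + z.im) / 2 := by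
  rw [lineProj, up_sq]
  simp [Complex.div_re, Complex.normSq_apply, Complex.add_re, Complex.add_im,
    Complex.mul_re, Complex.mul_im]

lemma lineProj_um_re (z : ℂ) :
    (lineProj (Complex.exp (-(Real.pi / 4) * Complex.I)) z).re = (z.re - z.im) / 2 := by
  rw [lineProj, um_sq]
  simp [Complex.div_re, Complex.normSq_apply, Complex.add_re, Complex.add_im,
    Complex.mul_re, Complex.mul_im]
  ring

/-- **`H^•` is subharmonic and `H^∘` is superharmonic.**
Let `f` be s-holomorphic on the medial lattice of mesh `δ` and let `H` be the
associated primitive of `Im(f² dz)` on faces.  Then on every black face (`m + n` even)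
the sum of the increments of `H` to the four neighbouring black faces is `≥ 0`
(subharmonicity of `H^•`), while on every white face (`m + n` odd) the analogous sum is
`≤ 0` (superharmonicity of `H^∘`). -/
theorem primitive_subharmonic_superharmonic (δ : ℝ) (hδ : 0 < δ) (f : ℤ × ℤ → ℂ)
    (hsV : ∀ m n : ℤ,
      lineProj (uVertEdge m n) (f (m, n)) = lineProj (uVertEdge m n) (f (m, n - 1)))
    (hsH : ∀ m n : ℤ,
      lineProj (uHorEdge m n) (f (m, n)) = lineProj (uHorEdge m n) (f (m - 1, n)))
    (H : ℤ × ℤ → ℝ) (hH : IsPrimitiveOfImFSq δ f H) :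
    ∀ m n : ℤ,
      (Even (m + n) →
        0 ≤ (H (m + 1, n + 1) - H (m, n)) + (H (m + 1, n - 1) - H (m, n))
            + (H (m - 1, n + 1) - H (m, n)) + (H (m - 1, n - 1) - H (m, n))) ∧
      (¬ Even (m + n) →
        (H (m + 1, n + 1) - H (m, n)) + (H (m + 1, n - 1) - H (m, n))
            + (H (m - 1, n + 1) - H (m, n)) + (H (m - 1, n - 1) - H (m, n)) ≤ 0) := by
  intro m n
  have hn : n - 1 + 1 = n := by ring
  have hm : m - 1 + 1 = m := by ring
  have hm1 : m + 1 - 1 = m := by ring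
  constructor
  · -- black case
    intro h
    have hp1 : ¬ Even (m + 1 + n) := by rw [Int.even_iff] at h ⊢; omega
    have hp2 : ¬ Even (m + (n - 1)) := by rw [Int.even_iff] at h ⊢; omega
    have hp3 : ¬ Even (m - 1 + n) := by rw [Int.even_iff] at h ⊢; omega
    have hp4 : Even (m - 1 + (n - 1)) := by rw [Int.even_iff] at h ⊢; omega
    have E1 := (hH m n).1
    have E2 := (hH (m + 1) n).2
    have E3 := (hH m (n - 1)).1
    have E4 := (hH m (n - 1)).2
    have E5 := (hH (m - 1) n).2
    have E6 := (hH (m - 1) n).1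
    have E7 := (hH (m - 1) (n - 1)).1
    simp only [uVertEdge, uHorEdge, if_pos h] at E1
    rw [sq_abs_lineProj_um] at E1
    simp only [uVertEdge, uHorEdge, if_neg hp1] at E2
    rw [sq_abs_lineProj_one] at E2
    simp only [uVertEdge, uHorEdge, if_neg hp2] at E3
    rw [sq_abs_lineProj_up] at E3
    simp only [uVertEdge, uHorEdge, if_neg hp2] at E4
    rw [sq_abs_lineProj_one, hn] at E4
    simp only [uVertEdge, uHorEdge, if_neg hp3] at E5
    rw [sq_abs_lineProj_one] at E5
    simp only [uVertEdge, uHorEdge, if_neg hp3] at E6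
    rw [sq_abs_lineProj_up, hm] at E6
    simp only [uVertEdge, uHorEdge, if_pos hp4] at E7
    rw [sq_abs_lineProj_um, hm] at E7
    -- constraints
    have C1 := hsH (m + 1) n
    simp only [uHorEdge, if_neg hp1, hm1] at C1
    rw [lineProj_one, lineProj_one] at C1
    have c1 : (f (m + 1, n)).re = (f (m, n)).re := Complex.ofReal_inj.mp C1
    have C2 := congrArg Complex.re (hsV m n)
    simp only [uVertEdge, if_pos h] at C2
    rw [lineProj_um_re, lineProj_um_re] at C2
    have C3 := congrArg Complex.im (hsH m n)
    simp only [uHorEdge, if_pos h] at C3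
    rw [lineProj_I, lineProj_I] at C3
    simp only [Complex.mul_im, Complex.I_re, Complex.I_im, Complex.ofReal_re,
      Complex.ofReal_im, mul_one, mul_zero, zero_add, add_zero] at C3
    have C4 := hsH m (n - 1)
    simp only [uHorEdge, if_neg hp2] at C4
    rw [lineProj_one, lineProj_one] at C4
    have c4 : (f (m, n - 1)).re = (f (m - 1, n - 1)).re := Complex.ofReal_inj.mp C4
    have C5 := congrArg Complex.re (hsV (m - 1) n)
    simp only [uVertEdge, if_neg hp3] at C5
    rw [lineProj_up_re, lineProj_up_re] at C5
    -- substitutions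
    rw [c1] at E2
    have hw2 : (f (m, n - 1)).im
        = (f (m, n - 1)).re - (f (m, n)).re + (f (m, n)).im := by linarith
    rw [hw2] at E3
    have hv2 : (f (m - 1, n)).im = (f (m, n)).im := C3.symm
    rw [hv2] at E6
    have hs1 : (f (m - 1, n - 1)).re = (f (m, n - 1)).re := c4.symm
    have hs2 : (f (m - 1, n - 1)).im
        = (f (m - 1, n)).re + (f (m, n)).im - (f (m, n - 1)).re := by linarith
    rw [hs1, hs2] at E7
    have key : (H (m + 1, n + 1) - H (m, n)) + (H (m + 1, n - 1) - H (m, n))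
          + (H (m - 1, n + 1) - H (m, n)) + (H (m - 1, n - 1) - H (m, n))
        = δ * (((f (m, n - 1)).re - (f (m, n)).re) ^ 2
            + ((f (m, n - 1)).re - (f (m - 1, n)).re) ^ 2) := by
      linear_combination E2 - E1 + E3 - 2 * E4 + E5 - E6 + E7
    have pos : 0 ≤ δ * (((f (m, n - 1)).re - (f (m, n)).re) ^ 2
        + ((f (m, n - 1)).re - (f (m - 1, n)).re) ^ 2) := by positivity
    linarith
  · -- white case
    intro h
    have hp1 : Even (m + 1 + n) := by rw [Int.even_iff] at h ⊢; omega
    have hp2 : Even (m + (n - 1)) := by rw [Int.even_iff] at h ⊢; omega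
    have hp3 : Even (m - 1 + n) := by rw [Int.even_iff] at h ⊢; omega
    have hp4 : ¬ Even (m - 1 + (n - 1)) := by rw [Int.even_iff] at h ⊢; omega
    have E1 := (hH (m + 1) n).2
    have E2 := (hH m n).1
    have E3 := (hH m (n - 1)).1
    have E4 := (hH m (n - 1)).2
    have E5 := (hH (m - 1) n).2
    have E6 := (hH (m - 1) n).1
    have E7 := (hH (m - 1) (n - 1)).1
    simp only [uVertEdge, uHorEdge, if_pos hp1] at E1
    rw [sq_abs_lineProj_I] at E1
    simp only [uVertEdge, uHorEdge, if_neg h] at E2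
    rw [sq_abs_lineProj_up] at E2
    simp only [uVertEdge, uHorEdge, if_pos hp2] at E3
    rw [sq_abs_lineProj_um] at E3
    simp only [uVertEdge, uHorEdge, if_pos hp2] at E4
    rw [sq_abs_lineProj_I, hn] at E4
    simp only [uVertEdge, uHorEdge, if_pos hp3] at E5
    rw [sq_abs_lineProj_I] at E5
    simp only [uVertEdge, uHorEdge, if_pos hp3] at E6
    rw [sq_abs_lineProj_um, hm] at E6
    simp only [uVertEdge, uHorEdge, if_neg hp4] at E7
    rw [sq_abs_lineProj_up, hm] at E7
    -- constraints
    have C1 := congrArg Complex.im (hsH (m + 1) n)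
    simp only [uHorEdge, if_pos hp1, hm1] at C1
    rw [lineProj_I, lineProj_I] at C1
    simp only [Complex.mul_im, Complex.I_re, Complex.I_im, Complex.ofReal_re,
      Complex.ofReal_im, mul_one, mul_zero, zero_add, add_zero] at C1
    have C2 := congrArg Complex.re (hsV m n)
    simp only [uVertEdge, if_neg h] at C2
    rw [lineProj_up_re, lineProj_up_re] at C2
    have C3 := hsH m n
    simp only [uHorEdge, if_neg h] at C3
    rw [lineProj_one, lineProj_one] at C3
    have c3 : (f (m, n)).re = (f (m - 1, n)).re := Complex.ofReal_inj.mp C3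
    have C4 := congrArg Complex.im (hsH m (n - 1))
    simp only [uHorEdge, if_pos hp2] at C4
    rw [lineProj_I, lineProj_I] at C4
    simp only [Complex.mul_im, Complex.I_re, Complex.I_im, Complex.ofReal_re,
      Complex.ofReal_im, mul_one, mul_zero, zero_add, add_zero] at C4
    have C5 := congrArg Complex.re (hsV (m - 1) n)
    simp only [uVertEdge, if_pos hp3] at C5
    rw [lineProj_um_re, lineProj_um_re] at C5
    -- substitutions
    have hc1 : (f (m + 1, n)).im = (f (m, n)).im := C1
    rw [hc1] at E1
    have hw1 : (f (m, n - 1)).re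
        = (f (m, n)).re + (f (m, n)).im - (f (m, n - 1)).im := by linarith
    rw [hw1] at E3
    have hv1 : (f (m - 1, n)).re = (f (m, n)).re := c3.symm
    rw [hv1] at E6
    have hs2 : (f (m - 1, n - 1)).im = (f (m, n - 1)).im := C4.symm
    have hs1 : (f (m - 1, n - 1)).re
        = (f (m, n - 1)).im + (f (m, n)).re - (f (m - 1, n)).im := by linarith
    rw [hs1, hs2] at E7
    have key : (H (m + 1, n + 1) - H (m, n)) + (H (m + 1, n - 1) - H (m, n))
          + (H (m - 1, n + 1) - H (m, n)) + (H (m - 1, n - 1) - H (m, n))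
        = -(δ * (((f (m, n - 1)).im - (f (m, n)).im) ^ 2
            + ((f (m, n - 1)).im - (f (m - 1, n)).im) ^ 2)) := by
      linear_combination -E1 + E2 - E3 + 2 * E4 - E5 + E6 - E7
    have pos : 0 ≤ δ * (((f (m, n - 1)).im - (f (m, n)).im) ^ 2
        + ((f (m, n - 1)).im - (f (m - 1, n)).im) ^ 2) := by positivity
    linarith
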